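/- arXiv:2401.09111 — 4 statements merged into one kernel-verified Lean document; each statement's English description precedes it below -/
import Mathlib

section
/- Let N be a positive integer, let x ∈ ℝ^N with x ≠ 0, and let ᾱ > 0 and β > 0. Then there exists a unique μ* > 0 such that ψ(μ*) = 0, where ψ(μ) = ∑_{i=1}^N max(0, √(ᾱβ/2)·|x_i|/√μ − ᾱβ) − 1. Equivalently, there is a unique μ* > 0 such that ∑_{i=1}^N max(0, √(ᾱβ/2)·|x_i|/√μ* − ᾱβ) = 1. -/
open Finset

/-- For `x ≠ 0` there is a unique `μ* > 0` with
`∑_{i=1}^N max(0, √(ᾱβ/2)·|x_i|/√μ* − ᾱβ) = 1`, i.e. `ψ(μ*) = 0`. -/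
theorem psi_exists_unique_positive_zero (N : ℕ) (hN : 0 < N) (x : Fin N → ℝ) (hx : x ≠ 0)
    (α β : ℝ) (hα : 0 < α) (hβ : 0 < β) :
    ∃! μ : ℝ, 0 < μ ∧
      (∑ i : Fin N, max 0 (Real.sqrt (α * β / 2) * |x i| / Real.sqrt μ - α * β)) = 1 := by
  have hb : 0 < α * β := mul_pos hα hβ
  set c := Real.sqrt (α * β / 2) with hc
  have hcpos : 0 < c := Real.sqrt_pos.mpr (by linarith)
  set F : ℝ → ℝ := fun s => ∑ i : Fin N, max 0 (c * |x i| * s - α * β) with hF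
  have hFcont : Continuous F := by
    apply continuous_finset_sum
    intro i _
    exact continuous_const.max (by continuity)
  have hF0 : F 0 = 0 := by
    simp only [hF, mul_zero, zero_sub]
    simp [max_eq_left (neg_nonpos.mpr hb.le)]
  obtain ⟨i0, hi0⟩ : ∃ i, x i ≠ 0 := Function.ne_iff.mp hx
  have hxi0 : 0 < |x i0| := abs_pos.mpr hi0
  have ha0 : 0 < c * |x i0| := mul_pos hcpos hxi0
  set S : ℝ := (1 + α * β) / (c * |x i0|) with hS
  have hSpos : 0 < S := div_pos (by linarith) ha0
  have hFS : 1 ≤ F S := by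
    have h1 : c * |x i0| * S = 1 + α * β := by
      rw [hS]; field_simp [ha0.ne']
    have h2 : max 0 (c * |x i0| * S - α * β) = 1 := by
      rw [h1]; rw [max_eq_right (by linarith)]; ring
    have h3 : max 0 (c * |x i0| * S - α * β) ≤ F S :=
      Finset.single_le_sum (f := fun i => max 0 (c * |x i| * S - α * β))
        (fun i _ => le_max_left _ _) (Finset.mem_univ i0)
    linarith
  have hmono : ∀ s t : ℝ, s ≤ t → F s ≤ F t := by
    intro s t hst
    apply Finset.sum_le_sum
    intro i _
    apply max_le_max le_rfl
    have : c * |x i| * s ≤ c * |x i| * t :=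
      mul_le_mul_of_nonneg_left hst (by positivity)
    linarith
  -- existence of s
  obtain ⟨s, hsmem, hFs⟩ : ∃ s ∈ Set.Icc 0 S, F s = 1 := by
    have := intermediate_value_Icc hSpos.le hFcont.continuousOn
    have h1 : (1:ℝ) ∈ Set.Icc (F 0) (F S) := ⟨by rw [hF0]; norm_num, hFS⟩
    obtain ⟨s, hs, hFs⟩ := this h1
    exact ⟨s, hs, hFs⟩
  have hspos : 0 < s := by
    rcases lt_or_eq_of_le hsmem.1 with h | h
    · exact h
    · exfalso; rw [← h, hF0] at hFs; norm_num at hFs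
  -- strict monotonicity where F = 1
  have hstrict : ∀ u t : ℝ, 0 < u → u < t → F u = 1 → F u < F t := by
    intro u t hu hut hFu
    obtain ⟨i, _, hi⟩ : ∃ i ∈ Finset.univ, 0 < max 0 (c * |x i| * u - α * β) := by
      by_contra h
      push_neg at h
      have : F u ≤ 0 := Finset.sum_nonpos fun i hi => h i hi
      rw [hFu] at this; norm_num at this
    have hia : 0 < c * |x i| * u - α * β := by
      by_contra hcon
      push_neg at hcon
      rw [max_eq_left hcon] at hi
      exact lt_irrefl 0 hi
    have haix : 0 < c * |x i| := by
      rcases (mul_nonneg hcpos.le (abs_nonneg (x i))).lt_or_eq with h | h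
      · exact h
      · rw [← h, zero_mul] at hia; linarith
    apply Finset.sum_lt_sum
    · intro j _
      apply max_le_max le_rfl
      have : c * |x j| * u ≤ c * |x j| * t :=
        mul_le_mul_of_nonneg_left hut.le (by positivity)
      linarith
    · refine ⟨i, Finset.mem_univ i, ?_⟩
      have h1 : c * |x i| * u < c * |x i| * t := by
        exact mul_lt_mul_of_pos_left hut haix
      rw [max_eq_right hia.le, max_eq_right (by linarith)]
      linarith
  have suniq : ∀ t : ℝ, 0 < t → F t = 1 → t = s := by
    intro t ht hFt
    rcases lt_trichotomy t s with h | h | h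
    · exact absurd (hstrict t s ht h hFt) (by rw [hFt, hFs]; exact lt_irrefl 1)
    · exact h
    · exact absurd (hstrict s t hspos h hFs) (by rw [hFt, hFs]; exact lt_irrefl 1)
  -- package as μ = (s⁻¹)^2
  have hsqrt : Real.sqrt ((s⁻¹)^2) = s⁻¹ := Real.sqrt_sq (by positivity)
  refine ⟨(s⁻¹)^2, ⟨by positivity, ?_⟩, ?_⟩
  · rw [hsqrt]
    have : ∀ i : Fin N, c * |x i| / s⁻¹ = c * |x i| * s := by
      intro i; rw [div_inv_eq_mul]
    simp only [this]
    exact hFs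
  · rintro μ ⟨hμpos, hμsum⟩
    have hsμ : 0 < Real.sqrt μ := Real.sqrt_pos.mpr hμpos
    set t : ℝ := (Real.sqrt μ)⁻¹ with ht
    have htpos : 0 < t := by positivity
    have hFt : F t = 1 := by
      rw [hF]
      have : ∀ i : Fin N, c * |x i| * t = c * |x i| / Real.sqrt μ := by
        intro i; rw [ht, ← div_eq_mul_inv]
      simp only [this]
      exact hμsum
    have hts : t = s := suniq t htpos hFt
    have : Real.sqrt μ = s⁻¹ := by
      rw [← hts, ht, inv_inv]
    calc μ = (Real.sqrt μ)^2 := (Real.sq_sqrt hμpos.le).symm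
      _ = (s⁻¹)^2 := by rw [this]
end

section
/- Let N be a positive integer, x ∈ ℝ^N with x ≠ 0, and ᾱ > 0, β > 0. Let μ* > 0 satisfy ∑_{i=1}^N max(0, √(ᾱβ/2)·|x_i|/√μ* − ᾱβ) = 1, and set λ_i := max(0, √(ᾱβ/2)·|x_i|/√μ* − ᾱβ) for i = 1,…,N. Then the vector u* ∈ ℝ^N with components u*_i = λ_i x_i/(λ_i + ᾱβ) is the unique minimizer over ℝ^N of the function u ↦ (1/2)|u − x|₂² + (ᾱβ/2)|u|₁², where |u|₂ is the Euclidean norm and |u|₁ = ∑_{i=1}^N |u_i|. -/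
open Finset

/-- One-dimensional optimality via a subgradient `g`. -/
private lemma soft_opt (a τ v u g : ℝ) (hτ : 0 ≤ τ) (hg1 : |g| ≤ 1)
    (hg2 : g * v = |v|) (hg3 : v - a + τ * g = 0) :
    1/2 * (v - a)^2 + τ * |v| ≤ 1/2 * (u - a)^2 + τ * |u| := by
  have h1 : g * u ≤ |u| := by
    calc g * u ≤ |g * u| := le_abs_self _
    _ = |g| * |u| := abs_mul g u
    _ ≤ 1 * |u| := by nlinarith [abs_nonneg u]
    _ = |u| := one_mul _
  have key : (v - a + τ * g) * (u - v) = 0 := by rw [hg3]; ring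
  nlinarith [sq_nonneg (u - v), mul_nonneg hτ (sub_nonneg.mpr h1), hg2, key]


set_option maxHeartbeats 1000000 in
/-- With `μ* > 0` the positive zero of `ψ` and
`λ_i = max(0, √(ᾱβ/2)·|x_i|/√μ* − ᾱβ)`, the vector with components
`u*_i = λ_i x_i/(λ_i + ᾱβ)` is the unique minimizer over `ℝ^N` of
`u ↦ (1/2)|u − x|₂² + (ᾱβ/2)|u|₁²`. -/
theorem prox_sq_l1_formula (N : ℕ) (hN : 0 < N) (x : Fin N → ℝ) (hx : x ≠ 0)
    (α β : ℝ) (hα : 0 < α) (hβ : 0 < β) (μstar : ℝ) (hμ : 0 < μstar)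
    (hzero : (∑ i : Fin N,
        max 0 (Real.sqrt (α * β / 2) * |x i| / Real.sqrt μstar - α * β)) = 1)
    (lam : Fin N → ℝ)
    (hlam : ∀ i, lam i = max 0 (Real.sqrt (α * β / 2) * |x i| / Real.sqrt μstar - α * β))
    (ustar : Fin N → ℝ)
    (hustar : ∀ i, ustar i = lam i * x i / (lam i + α * β)) :
    (∀ u : Fin N → ℝ,
        (1 / 2) * (∑ i : Fin N, (ustar i - x i) ^ 2)
          + (α * β / 2) * (∑ i : Fin N, |ustar i|) ^ 2
        ≤ (1 / 2) * (∑ i : Fin N, (u i - x i) ^ 2)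
          + (α * β / 2) * (∑ i : Fin N, |u i|) ^ 2) ∧
    (∀ u : Fin N → ℝ,
        (∀ w : Fin N → ℝ,
          (1 / 2) * (∑ i : Fin N, (u i - x i) ^ 2)
            + (α * β / 2) * (∑ i : Fin N, |u i|) ^ 2
          ≤ (1 / 2) * (∑ i : Fin N, (w i - x i) ^ 2)
            + (α * β / 2) * (∑ i : Fin N, |w i|) ^ 2) → u = ustar) := by
  set c := α * β with hc
  have hcpos : 0 < c := mul_pos hα hβ
  set s := Real.sqrt (c / 2) with hs
  have hspos : 0 < s := Real.sqrt_pos.mpr (by linarith)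
  set r := Real.sqrt μstar with hr
  have hrpos : 0 < r := Real.sqrt_pos.mpr hμ
  set t := r / s with htdef
  have htpos : 0 < t := by rw [htdef]; positivity
  set τ := c * t with hτdef
  have hτpos : 0 < τ := mul_pos hcpos htpos
  have hτeq : τ = c * r / s := by rw [hτdef, htdef]; ring
  clear_value c s r t τ
  have hlsum : ∑ i, lam i = 1 := by
    simp only [hlam]; exact hzero
  -- |ustar i| = (r/s) * lam i
  have habs : ∀ i, |ustar i| = r / s * lam i := by
    intro i
    rcases le_or_gt (s * |x i| / r - c) 0 with h | h
    · have hl : lam i = 0 := by rw [hlam i]; exact max_eq_left h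
      rw [hustar i, hl]; simp
    · have hl : lam i = s * |x i| / r - c := by rw [hlam i]; exact max_eq_right h.le
      have hxpos : 0 < |x i| := by
        rcases (abs_nonneg (x i)).lt_or_eq with h' | h'
        · exact h'
        · exfalso; rw [← h'] at h; simp at h
          nlinarith [mul_pos hspos hrpos]
      have hden : 0 < s * |x i| / r := by positivity
      rw [hustar i, hl, show s * |x i| / r - c + c = s * |x i| / r from by ring,
        abs_div, abs_mul, abs_of_pos h, abs_of_pos hden]
      field_simp
  have hsum : ∑ i, |ustar i| = r / s := by
    rw [show (∑ i, |ustar i|) = ∑ i, r / s * lam i from Finset.sum_congr rfl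
      (fun i _ => habs i), ← Finset.mul_sum, hlsum, mul_one]
  -- coordinatewise optimality with threshold τ
  have hcoord : ∀ i, ∀ v : ℝ,
      1/2 * (ustar i - x i)^2 + τ * |ustar i| ≤ 1/2 * (v - x i)^2 + τ * |v| := by
    intro i v
    rcases le_or_gt (s * |x i| / r - c) 0 with h | h
    · have hl : lam i = 0 := by rw [hlam i]; exact max_eq_left h
      have hu0 : ustar i = 0 := by rw [hustar i, hl]; simp
      have hcr : s * |x i| ≤ c * r := by
        have h' : s * |x i| / r ≤ c := by linarith
        calc s * |x i| = (s * |x i| / r) * r := by field_simp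
        _ ≤ c * r := by nlinarith
      have hxle : |x i| ≤ τ := by
        rw [hτeq, le_div_iff₀ hspos]
        nlinarith
      rw [hu0]
      apply soft_opt (x i) τ 0 v (x i / τ) hτpos.le
      · rw [abs_div, abs_of_pos hτpos, div_le_one hτpos]; exact hxle
      · simp
      · field_simp; ring
    · have hl : lam i = s * |x i| / r - c := by rw [hlam i]; exact max_eq_right h.le
      have hcr : c * r < s * |x i| := by
        have h' : c < s * |x i| / r := by linarith
        calc c * r < (s * |x i| / r) * r := by nlinarith
        _ = s * |x i| := by field_simp
      have hxgt : τ < |x i| := by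
        rw [hτeq, div_lt_iff₀ hspos]
        nlinarith
      have hxabs : |x i| ≠ 0 := (lt_trans hτpos hxgt).ne'
      have hx0 : x i ≠ 0 := abs_ne_zero.mp hxabs
      have hu : ustar i = x i - τ * (x i / |x i|) := by
        rw [hustar i, hl,
          show s * |x i| / r - c + c = s * |x i| / r from by ring, hτeq]
        field_simp
      have hu' : ustar i = x i / |x i| * (|x i| - τ) := by
        rw [hu]; field_simp
      have hgabs : abs (x i / |x i|) = 1 := by
        rw [abs_div, abs_abs, div_self hxabs]
      have habsu : |ustar i| = |x i| - τ := by
        rw [hu', abs_mul, hgabs, one_mul, abs_of_pos (by linarith : (0:ℝ) < |x i| - τ)]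
      apply soft_opt (x i) τ (ustar i) v (x i / |x i|) hτpos.le hgabs.le
      · have hsq : (x i / |x i|)^2 = 1 := by
          rw [div_pow, sq_abs]; exact div_self (pow_ne_zero 2 hx0)
        rw [habsu, hu']
        linear_combination (|x i| - τ) * hsq
      · rw [hu]; ring
  -- Part 1
  have part1 : ∀ u : Fin N → ℝ,
      (1 / 2) * (∑ i : Fin N, (ustar i - x i) ^ 2) + (c / 2) * (∑ i : Fin N, |ustar i|) ^ 2
        ≤ (1 / 2) * (∑ i : Fin N, (u i - x i) ^ 2) + (c / 2) * (∑ i : Fin N, |u i|) ^ 2 := by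
    intro u
    have h1 : ∑ i, (1/2 * (ustar i - x i)^2 + τ * |ustar i|)
        ≤ ∑ i, (1/2 * (u i - x i)^2 + τ * |u i|) :=
      Finset.sum_le_sum (fun i _ => hcoord i (u i))
    rw [Finset.sum_add_distrib, Finset.sum_add_distrib, ← Finset.mul_sum, ← Finset.mul_sum,
      ← Finset.mul_sum, ← Finset.mul_sum, hsum, ← htdef, hτdef] at h1
    rw [hsum, ← htdef]
    nlinarith [h1, mul_nonneg hcpos.le (sq_nonneg ((∑ i, |u i|) - t))]
  refine ⟨part1, ?_⟩
  -- Part 2: uniqueness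
  intro u hu
  have hEq : (1 / 2) * (∑ i : Fin N, (u i - x i) ^ 2) + (c / 2) * (∑ i : Fin N, |u i|) ^ 2
      = (1 / 2) * (∑ i : Fin N, (ustar i - x i) ^ 2) + (c / 2) * (∑ i : Fin N, |ustar i|) ^ 2 :=
    le_antisymm (hu ustar) (part1 u)
  set w : Fin N → ℝ := fun i => (u i + ustar i) / 2 with hwdef
  have hw := hu w
  have hQ : ∑ i, (w i - x i)^2
      = 1/2 * ∑ i, (u i - x i)^2 + 1/2 * ∑ i, (ustar i - x i)^2
        - 1/4 * ∑ i, (u i - ustar i)^2 := by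
    rw [Finset.mul_sum, Finset.mul_sum, Finset.mul_sum, ← Finset.sum_add_distrib,
      ← Finset.sum_sub_distrib]
    refine Finset.sum_congr rfl (fun i _ => ?_)
    simp only [hwdef]; ring
  have hW1 : ∑ i, |w i| ≤ 1/2 * ((∑ i, |u i|) + ∑ i, |ustar i|) := by
    rw [← Finset.sum_add_distrib, Finset.mul_sum]
    refine Finset.sum_le_sum (fun i _ => ?_)
    simp only [hwdef]
    have h1 := abs_add_le (u i) (ustar i)
    have h2 : |(u i + ustar i)/2| = |u i + ustar i| / 2 := by
      rw [abs_div, abs_two]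
    linarith
  have hWnn : (0:ℝ) ≤ ∑ i, |w i| := Finset.sum_nonneg (fun i _ => abs_nonneg _)
  have hW2 : (∑ i, |w i|)^2 ≤ (1/2 * ((∑ i, |u i|) + ∑ i, |ustar i|))^2 :=
    pow_le_pow_left₀ hWnn hW1 2
  have hcW2 : c/2 * (∑ i, |w i|)^2 ≤ c/2 * (1/2 * ((∑ i, |u i|) + ∑ i, |ustar i|))^2 :=
    mul_le_mul_of_nonneg_left hW2 (by linarith)
  have hDnn : (0:ℝ) ≤ ∑ i, (u i - ustar i)^2 :=
    Finset.sum_nonneg (fun i _ => sq_nonneg _)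
  have hD0 : ∑ i, (u i - ustar i)^2 ≤ 0 := by
    set A := ∑ i, (u i - x i)^2 with hA
    set Bv := ∑ i, (ustar i - x i)^2 with hB
    set Cw := ∑ i, (w i - x i)^2 with hC
    set Su := ∑ i, |u i| with hSu
    set Sv := ∑ i, |ustar i| with hSv
    set Sw := ∑ i, |w i| with hSw
    set D := ∑ i, (u i - ustar i)^2 with hD
    nlinarith [hw, hQ, hcW2, hEq, mul_nonneg hcpos.le (sq_nonneg (Su - Sv))]
  have hD : ∑ i, (u i - ustar i)^2 = 0 := le_antisymm hD0 hDnn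
  funext i
  have := (Finset.sum_eq_zero_iff_of_nonneg (fun j _ => sq_nonneg (u j - ustar j))).mp hD
    i (Finset.mem_univ i)
  have := pow_eq_zero_iff (n := 2) (by norm_num) |>.mp this
  linarith [this]
end

section
/- Let N be a positive integer, x ∈ ℝ^N with x ≠ 0, and ᾱ > 0, β > 0. Let μ* > 0 satisfy ∑_{i=1}^N max(0, √(ᾱβ/2)·|x_i|/√μ* − ᾱβ) = 1, and let u* ∈ ℝ^N be the unique minimizer over ℝ^N of u ↦ (1/2)|u − x|₂² + (ᾱβ/2)|u|₁². Then for every index i, the i-th component of u* is nonzero if and only if √(ᾱβ/2)·|x_i|/√μ* − ᾱβ > 0. In particular, the number of nonzero components of u* equals the cardinality of the set {i ∈ {1,…,N} : √(ᾱβ/2)·|x_i|/√μ* − ᾱβ > 0}. -/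
open Finset

/-- If `μ* > 0` is the positive zero of `ψ` and `u*` is the unique
minimizer of `u ↦ (1/2)|u − x|₂² + (ᾱβ/2)|u|₁²`, then `u*_i ≠ 0` iff
`√(ᾱβ/2)·|x_i|/√μ* − ᾱβ > 0`; in particular the number of nonzero components of
`u*` equals the cardinality of `{i : √(ᾱβ/2)·|x_i|/√μ* − ᾱβ > 0}`. -/
theorem prox_sq_l1_sparsity (N : ℕ) (hN : 0 < N) (x : Fin N → ℝ) (hx : x ≠ 0)
    (α β : ℝ) (hα : 0 < α) (hβ : 0 < β) (μstar : ℝ) (hμ : 0 < μstar)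
    (hzero : (∑ i : Fin N,
        max 0 (Real.sqrt (α * β / 2) * |x i| / Real.sqrt μstar - α * β)) = 1)
    (ustar : Fin N → ℝ)
    (hmin : ∀ u : Fin N → ℝ,
        (1 / 2) * (∑ i : Fin N, (ustar i - x i) ^ 2)
          + (α * β / 2) * (∑ i : Fin N, |ustar i|) ^ 2
        ≤ (1 / 2) * (∑ i : Fin N, (u i - x i) ^ 2)
          + (α * β / 2) * (∑ i : Fin N, |u i|) ^ 2)
    (huniq : ∀ u : Fin N → ℝ,
        (∀ w : Fin N → ℝ,
          (1 / 2) * (∑ i : Fin N, (u i - x i) ^ 2)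
            + (α * β / 2) * (∑ i : Fin N, |u i|) ^ 2
          ≤ (1 / 2) * (∑ i : Fin N, (w i - x i) ^ 2)
            + (α * β / 2) * (∑ i : Fin N, |w i|) ^ 2) → u = ustar) :
    (∀ i : Fin N, ustar i ≠ 0 ↔
        0 < Real.sqrt (α * β / 2) * |x i| / Real.sqrt μstar - α * β) ∧
    {i : Fin N | ustar i ≠ 0}.ncard =
      {i : Fin N | 0 < Real.sqrt (α * β / 2) * |x i| / Real.sqrt μstar - α * β}.ncard := by

  have hc0 : (0:ℝ) < α * β := mul_pos hα hβ
  set τ : ℝ := Real.sqrt (2 * μstar * (α * β)) with hτdef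
  have hτ0 : 0 < τ := Real.sqrt_pos.mpr (by positivity)
  set k : ℝ := Real.sqrt (α * β / 2) / Real.sqrt μstar with hkdef
  have hμs : Real.sqrt μstar ≠ 0 := ne_of_gt (Real.sqrt_pos.mpr hμ)
  have hk0 : 0 < k := div_pos (Real.sqrt_pos.mpr (by positivity)) (Real.sqrt_pos.mpr hμ)
  have hkτ : k * τ = α * β := by
    rw [hkdef, hτdef, div_mul_eq_mul_div, ← Real.sqrt_mul (by positivity)]
    have h1 : α * β / 2 * (2 * μstar * (α * β)) = (α * β) ^ 2 * μstar := by ring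
    rw [h1, Real.sqrt_mul (by positivity), Real.sqrt_sq hc0.le, mul_div_assoc,
      div_self hμs, mul_one]
  have hterm : ∀ i, Real.sqrt (α * β / 2) * |x i| / Real.sqrt μstar - α * β
      = k * |x i| - α * β := by
    intro i
    rw [hkdef, div_mul_eq_mul_div]
  have hiff0 : ∀ i, (0 < Real.sqrt (α * β / 2) * |x i| / Real.sqrt μstar - α * β)
      ↔ τ < |x i| := by
    intro i
    rw [hterm i, sub_pos, ← hkτ]
    exact mul_lt_mul_iff_right₀ hk0
  have hmax : ∀ i, max 0 (Real.sqrt (α * β / 2) * |x i| / Real.sqrt μstar - α * β)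
      = k * max 0 (|x i| - τ) := by
    intro i
    rw [hterm i, ← hkτ, mul_max_of_nonneg _ _ hk0.le, mul_zero, mul_sub]
  have h1sum : k * (∑ i, max 0 (|x i| - τ)) = 1 := by
    rw [Finset.mul_sum, ← hzero]
    exact Finset.sum_congr rfl fun i _ => (hmax i).symm
  have hS : α * β * (∑ i, max 0 (|x i| - τ)) = τ := by
    linear_combination τ * h1sum - (∑ i, max 0 (|x i| - τ)) * hkτ
  set v : Fin N → ℝ := fun i => if |x i| ≤ τ then 0 else Real.sign (x i) * (|x i| - τ)
    with hv
  have habsv : ∀ i, |v i| = max 0 (|x i| - τ) := by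
    intro i
    by_cases h : |x i| ≤ τ
    · simp [hv, if_pos h, abs_zero, max_eq_left (sub_nonpos.mpr h)]
    · push_neg at h
      have hx0 : x i ≠ 0 := by
        intro h0
        rw [h0, abs_zero] at h
        linarith
      have hs : |Real.sign (x i)| = 1 := by
        rcases lt_trichotomy (x i) 0 with h' | h' | h'
        · rw [Real.sign_of_neg h']; norm_num
        · exact absurd h' hx0
        · rw [Real.sign_of_pos h']; norm_num
      simp only [hv, if_neg (not_le.mpr h)]
      rw [abs_mul, hs, one_mul, abs_of_pos (by linarith), max_eq_right (by linarith)]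
  have key : ∀ i (wi : ℝ), 0 ≤ (v i - x i) * (wi - v i) + τ * (|wi| - |v i|) := by
    intro i wi
    by_cases h : |x i| ≤ τ
    · have hv0 : v i = 0 := by simp [hv, if_pos h]
      rw [hv0, abs_zero]
      have h1 : x i * wi ≤ |x i| * |wi| := (le_abs_self _).trans (le_of_eq (abs_mul _ _))
      have h2 : (0:ℝ) ≤ |wi| := abs_nonneg wi
      nlinarith [mul_nonneg (sub_nonneg.mpr h) h2]
    · push_neg at h
      have habs : |v i| = |x i| - τ := by
        rw [habsv i, max_eq_right (by linarith)]
      rcases lt_trichotomy (x i) 0 with h' | h' | h'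
      · have hvi : v i = x i + τ := by
          simp only [hv, if_neg (not_le.mpr h), Real.sign_of_neg h', abs_of_neg h']
          ring
        rw [abs_of_neg h'] at habs
        rw [habs, hvi]
        nlinarith [mul_nonneg hτ0.le (show (0:ℝ) ≤ wi + |wi| by linarith [neg_abs_le wi])]
      · exfalso
        rw [h', abs_zero] at h
        linarith
      · have hvi : v i = x i - τ := by
          simp only [hv, if_neg (not_le.mpr h), Real.sign_of_pos h', abs_of_pos h']
          ring
        rw [abs_of_pos h'] at habs
        rw [habs, hvi]
        nlinarith [mul_nonneg hτ0.le (show (0:ℝ) ≤ |wi| - wi by linarith [le_abs_self wi])]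
  have lemA : ∀ (w : Fin N → ℝ) (i : Fin N),
      (1/2) * (v i - x i) ^ 2 + τ * |v i| - τ * |w i| ≤ (1/2) * (w i - x i) ^ 2 := by
    intro w i
    nlinarith [key i (w i), sq_nonneg (w i - v i)]
  have hFv : ∀ w : Fin N → ℝ,
      (1 / 2) * (∑ i : Fin N, (v i - x i) ^ 2)
          + (α * β / 2) * (∑ i : Fin N, |v i|) ^ 2
        ≤ (1 / 2) * (∑ i : Fin N, (w i - x i) ^ 2)
          + (α * β / 2) * (∑ i : Fin N, |w i|) ^ 2 := by
    intro w
    have hSv : α * β * (∑ i, |v i|) = τ := by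
      rw [show (∑ i, |v i|) = ∑ i, max 0 (|x i| - τ) from
        Finset.sum_congr rfl fun i _ => habsv i]
      exact hS
    have hsum := Finset.sum_le_sum (fun i (_ : i ∈ Finset.univ) => lemA w i)
    have e1 : ∑ i, ((1/2) * (v i - x i) ^ 2 + τ * |v i| - τ * |w i|)
        = (1/2) * (∑ i, (v i - x i) ^ 2) + τ * (∑ i, |v i|) - τ * (∑ i, |w i|) := by
      rw [Finset.sum_sub_distrib, Finset.sum_add_distrib, ← Finset.mul_sum,
        ← Finset.mul_sum, ← Finset.mul_sum]
    have e2 : ∑ i, (1/2) * (w i - x i) ^ 2 = (1/2) * ∑ i, (w i - x i) ^ 2 :=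
      (Finset.mul_sum _ _ _).symm
    rw [e1, e2] at hsum
    set Sv := ∑ i, |v i|
    set Sw := ∑ i, |w i|
    have h3 : α * β * Sv * Sw = τ * Sw := by rw [hSv]
    have h4 : α * β * Sv * Sv = τ * Sv := by rw [hSv]
    nlinarith [mul_nonneg (show (0:ℝ) ≤ α * β / 2 by positivity) (sq_nonneg (Sw - Sv))]
  have hveq : v = ustar := huniq v hFv
  have main : ∀ i : Fin N, ustar i ≠ 0 ↔
      0 < Real.sqrt (α * β / 2) * |x i| / Real.sqrt μstar - α * β := by
    intro i
    rw [← hveq, hiff0 i, ← abs_pos, habsv i]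
    simp [lt_max_iff, sub_pos]
  refine ⟨main, ?_⟩
  have hset : {i : Fin N | ustar i ≠ 0}
      = {i : Fin N | 0 < Real.sqrt (α * β / 2) * |x i| / Real.sqrt μstar - α * β} :=
    Set.ext fun i => main i
  rw [hset]
end

section
/- Let m, n be positive integers and 1 ≤ ℓ ≤ m, let z₁, …, z_n ∈ ℝ^m, α₁, …, α_n > 0, let W be a symmetric positive definite m×m real matrix with inner product (z,v)_W = zᵀWv and norm |z|_W, and let ℛψ = ∑_{j=1}^n α_j (ψ, z_j)_W z_j. Suppose ψ₁, …, ψ_m is a basis of ℝ^m that is orthonormal with respect to (·,·)_W and satisfies ℛψ_i = λ_i ψ_i with λ₁ ≥ λ₂ ≥ … ≥ λ_m. Then for every family φ₁, …, φ_ℓ ∈ ℝ^m that is orthonormal with respect to (·,·)_W, ∑_{j=1}^n α_j |z_j − ∑_{i=1}^ℓ (z_j, ψ_i)_W ψ_i|_W² ≤ ∑_{j=1}^n α_j |z_j − ∑_{i=1}^ℓ (z_j, φ_i)_W φ_i|_W²; that is, the eigenvectors of ℛ associated with the ℓ largest eigenvalues solve the POD basis minimization problem of rank ℓ. -/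
open Matrix Finset

section PODAux
variable {m : ℕ} {W : Matrix (Fin m) (Fin m) ℝ}

lemma pod_ip_symm (hW : W.IsSymm) (x y : Fin m → ℝ) :
    x ⬝ᵥ W.mulVec y = y ⬝ᵥ W.mulVec x := by
  rw [Matrix.dotProduct_mulVec, ← Matrix.mulVec_transpose, hW.eq, dotProduct_comm]

lemma pod_ip_nonneg (hW : W.PosDef) (x : Fin m → ℝ) : 0 ≤ x ⬝ᵥ W.mulVec x := by
  simpa using hW.posSemidef.dotProduct_mulVec_nonneg x

lemma pod_sum_dotProduct {ι : Type*} (s : Finset ι) (f : ι → Fin m → ℝ) (v : Fin m → ℝ) :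
    (∑ i ∈ s, f i) ⬝ᵥ v = ∑ i ∈ s, f i ⬝ᵥ v := by
  simp only [dotProduct, Finset.sum_apply, Finset.sum_mul]
  exact Finset.sum_comm

lemma pod_dotProduct_sum {ι : Type*} (s : Finset ι) (x : Fin m → ℝ) (f : ι → Fin m → ℝ) :
    x ⬝ᵥ (∑ i ∈ s, f i) = ∑ i ∈ s, x ⬝ᵥ f i := by
  simp only [dotProduct, Finset.sum_apply, Finset.mul_sum]
  exact Finset.sum_comm

lemma pod_mulVec_sum {ι : Type*} (s : Finset ι) (f : ι → Fin m → ℝ) :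
    W.mulVec (∑ i ∈ s, f i) = ∑ i ∈ s, W.mulVec (f i) := by
  rw [← Matrix.mulVecLin_apply, map_sum]
  simp [Matrix.mulVecLin_apply]

lemma pod_ip_sum_left {ι : Type*} (s : Finset ι) (g : ι → ℝ) (v : ι → Fin m → ℝ)
    (y : Fin m → ℝ) :
    (∑ i ∈ s, g i • v i) ⬝ᵥ W.mulVec y = ∑ i ∈ s, g i * (v i ⬝ᵥ W.mulVec y) := by
  rw [pod_sum_dotProduct]
  exact Finset.sum_congr rfl fun i _ => by rw [smul_dotProduct]; rfl

lemma pod_ip_sum_right {ι : Type*} (s : Finset ι) (x : Fin m → ℝ) (g : ι → ℝ)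
    (v : ι → Fin m → ℝ) :
    x ⬝ᵥ W.mulVec (∑ i ∈ s, g i • v i) = ∑ i ∈ s, g i * (x ⬝ᵥ W.mulVec (v i)) := by
  rw [pod_mulVec_sum, pod_dotProduct_sum]
  exact Finset.sum_congr rfl fun i _ => by rw [Matrix.mulVec_smul, dotProduct_smul]; rfl

/-- Expansion: `|x - proj|² = |x|² - Σ coeff²` for an orthonormal family. -/
lemma pod_expand (hW : W.IsSymm) {ι : Type*} [DecidableEq ι] (s : Finset ι)
    (v : ι → Fin m → ℝ)
    (h : ∀ i ∈ s, ∀ j ∈ s, v i ⬝ᵥ W.mulVec (v j) = if i = j then 1 else 0)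
    (x : Fin m → ℝ) :
    (x - ∑ i ∈ s, (x ⬝ᵥ W.mulVec (v i)) • v i) ⬝ᵥ
      W.mulVec (x - ∑ i ∈ s, (x ⬝ᵥ W.mulVec (v i)) • v i)
      = x ⬝ᵥ W.mulVec x - ∑ i ∈ s, (x ⬝ᵥ W.mulVec (v i))^2 := by
  set c : ι → ℝ := fun i => x ⬝ᵥ W.mulVec (v i) with hc
  have hx_p : x ⬝ᵥ W.mulVec (∑ i ∈ s, c i • v i) = ∑ i ∈ s, c i ^ 2 := by
    rw [pod_ip_sum_right]
    exact Finset.sum_congr rfl fun i _ => (pow_two (c i)).symm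
  have hp_x : (∑ i ∈ s, c i • v i) ⬝ᵥ W.mulVec x = ∑ i ∈ s, c i ^ 2 := by
    rw [pod_ip_sum_left]
    exact Finset.sum_congr rfl fun i _ => by rw [pod_ip_symm hW]; exact (pow_two (c i)).symm
  have hp_p : (∑ i ∈ s, c i • v i) ⬝ᵥ W.mulVec (∑ i ∈ s, c i • v i) = ∑ i ∈ s, c i ^ 2 := by
    rw [pod_ip_sum_left]
    refine Finset.sum_congr rfl fun i hi => ?_
    rw [pod_ip_sum_right]
    rw [Finset.sum_congr rfl fun j hj => by rw [h i hi j hj]]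
    simp [Finset.sum_ite_eq' s, hi, sq]
  rw [Matrix.mulVec_sub, sub_dotProduct, dotProduct_sub, dotProduct_sub, hx_p, hp_x, hp_p]
  ring
end PODAux

/-- Optimality of the POD basis: if `ψ₁, …, ψ_m` is a
`W`-orthonormal eigenbasis of `ℛ` with eigenvalues in nonincreasing order, then
for every `W`-orthonormal family `φ₁, …, φ_ℓ`, the mean square POD error of the
first `ℓ` eigenvectors is at most that of `φ₁, …, φ_ℓ`. -/
theorem pod_basis_optimality
    (m n ℓ : ℕ) (hm : 0 < m) (hn : 0 < n) (hℓ : 1 ≤ ℓ) (hℓm : ℓ ≤ m)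
    (z : Fin n → (Fin m → ℝ)) (α : Fin n → ℝ) (hα : ∀ j, 0 < α j)
    (W : Matrix (Fin m) (Fin m) ℝ) (hWsymm : W.IsSymm) (hWpos : W.PosDef)
    (R : (Fin m → ℝ) → (Fin m → ℝ))
    (hR : ∀ ψ : Fin m → ℝ, R ψ = ∑ j : Fin n, (α j * (ψ ⬝ᵥ W.mulVec (z j))) • z j)
    (ψ : Fin m → (Fin m → ℝ)) (lam : Fin m → ℝ)
    (hbasis : Submodule.span ℝ (Set.range ψ) = ⊤)
    (hortho : ∀ i j : Fin m, (ψ i) ⬝ᵥ W.mulVec (ψ j) = if i = j then 1 else 0)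
    (heig : ∀ i : Fin m, R (ψ i) = lam i • ψ i)
    (hdesc : ∀ i j : Fin m, i ≤ j → lam j ≤ lam i)
    (φ : Fin ℓ → (Fin m → ℝ))
    (hφortho : ∀ i j : Fin ℓ, (φ i) ⬝ᵥ W.mulVec (φ j) = if i = j then 1 else 0) :
    ∑ j : Fin n, α j *
        ((z j - ∑ i ∈ Finset.univ.filter (fun i : Fin m => (i : ℕ) < ℓ),
            ((z j) ⬝ᵥ W.mulVec (ψ i)) • ψ i) ⬝ᵥ
          W.mulVec (z j - ∑ i ∈ Finset.univ.filter (fun i : Fin m => (i : ℕ) < ℓ),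
            ((z j) ⬝ᵥ W.mulVec (ψ i)) • ψ i))
      ≤ ∑ j : Fin n, α j *
          ((z j - ∑ i : Fin ℓ, ((z j) ⬝ᵥ W.mulVec (φ i)) • φ i) ⬝ᵥ
            W.mulVec (z j - ∑ i : Fin ℓ, ((z j) ⬝ᵥ W.mulVec (φ i)) • φ i)) := by
  classical
  set F : Finset (Fin m) := Finset.univ.filter (fun i : Fin m => (i : ℕ) < ℓ) with hF
  have hFcard : F.card = ℓ := by
    have hFeq : F = Finset.map (Fin.castLEEmb hℓm) Finset.univ := by
      ext k
      simp only [hF, Finset.mem_filter, Finset.mem_univ, true_and, Finset.mem_map,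
        Fin.castLEEmb, Function.Embedding.coeFn_mk]
      constructor
      · intro hk; exact ⟨⟨(k : ℕ), hk⟩, rfl⟩
      · rintro ⟨a, rfl⟩; exact a.2
    rw [hFeq, Finset.card_map, Finset.card_univ, Fintype.card_fin]
  -- quadratic form of R
  have hRq : ∀ v : Fin m → ℝ, (R v) ⬝ᵥ W.mulVec v
      = ∑ j : Fin n, α j * (z j ⬝ᵥ W.mulVec v)^2 := by
    intro v
    rw [hR, pod_ip_sum_left]
    refine Finset.sum_congr rfl fun j _ => ?_
    rw [pod_ip_symm hWsymm v (z j)]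
    ring
  -- reduction of both sides
  have hL : ∑ j : Fin n, α j *
        ((z j - ∑ i ∈ F, ((z j) ⬝ᵥ W.mulVec (ψ i)) • ψ i) ⬝ᵥ
          W.mulVec (z j - ∑ i ∈ F, ((z j) ⬝ᵥ W.mulVec (ψ i)) • ψ i))
      = (∑ j : Fin n, α j * (z j ⬝ᵥ W.mulVec (z j))) - ∑ i ∈ F, lam i := by
    have hexp : ∀ j, (z j - ∑ i ∈ F, ((z j) ⬝ᵥ W.mulVec (ψ i)) • ψ i) ⬝ᵥ
          W.mulVec (z j - ∑ i ∈ F, ((z j) ⬝ᵥ W.mulVec (ψ i)) • ψ i)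
        = z j ⬝ᵥ W.mulVec (z j) - ∑ i ∈ F, (z j ⬝ᵥ W.mulVec (ψ i))^2 :=
      fun j => pod_expand hWsymm F ψ (fun i _ j _ => hortho i j) (z j)
    calc ∑ j : Fin n, α j *
        ((z j - ∑ i ∈ F, ((z j) ⬝ᵥ W.mulVec (ψ i)) • ψ i) ⬝ᵥ
          W.mulVec (z j - ∑ i ∈ F, ((z j) ⬝ᵥ W.mulVec (ψ i)) • ψ i))
        = ∑ j : Fin n, (α j * (z j ⬝ᵥ W.mulVec (z j))
            - ∑ i ∈ F, α j * (z j ⬝ᵥ W.mulVec (ψ i))^2) := by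
          refine Finset.sum_congr rfl fun j _ => ?_
          rw [hexp j, mul_sub, Finset.mul_sum]
      _ = (∑ j : Fin n, α j * (z j ⬝ᵥ W.mulVec (z j)))
            - ∑ i ∈ F, ∑ j : Fin n, α j * (z j ⬝ᵥ W.mulVec (ψ i))^2 := by
          rw [Finset.sum_sub_distrib, Finset.sum_comm]
      _ = (∑ j : Fin n, α j * (z j ⬝ᵥ W.mulVec (z j))) - ∑ i ∈ F, lam i := by
          congr 1
          refine Finset.sum_congr rfl fun i _ => ?_
          rw [← hRq (ψ i), heig i, smul_dotProduct, hortho i i]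
          simp
  have hRRHS : ∑ j : Fin n, α j *
          ((z j - ∑ i : Fin ℓ, ((z j) ⬝ᵥ W.mulVec (φ i)) • φ i) ⬝ᵥ
            W.mulVec (z j - ∑ i : Fin ℓ, ((z j) ⬝ᵥ W.mulVec (φ i)) • φ i))
      = (∑ j : Fin n, α j * (z j ⬝ᵥ W.mulVec (z j)))
          - ∑ i : Fin ℓ, (R (φ i)) ⬝ᵥ W.mulVec (φ i) := by
    have hexp : ∀ j, (z j - ∑ i : Fin ℓ, ((z j) ⬝ᵥ W.mulVec (φ i)) • φ i) ⬝ᵥ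
          W.mulVec (z j - ∑ i : Fin ℓ, ((z j) ⬝ᵥ W.mulVec (φ i)) • φ i)
        = z j ⬝ᵥ W.mulVec (z j) - ∑ i : Fin ℓ, (z j ⬝ᵥ W.mulVec (φ i))^2 :=
      fun j => pod_expand hWsymm Finset.univ φ (fun i _ j _ => hφortho i j) (z j)
    calc ∑ j : Fin n, α j *
          ((z j - ∑ i : Fin ℓ, ((z j) ⬝ᵥ W.mulVec (φ i)) • φ i) ⬝ᵥ
            W.mulVec (z j - ∑ i : Fin ℓ, ((z j) ⬝ᵥ W.mulVec (φ i)) • φ i))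
        = ∑ j : Fin n, (α j * (z j ⬝ᵥ W.mulVec (z j))
            - ∑ i : Fin ℓ, α j * (z j ⬝ᵥ W.mulVec (φ i))^2) := by
          refine Finset.sum_congr rfl fun j _ => ?_
          rw [hexp j, mul_sub, Finset.mul_sum]
      _ = (∑ j : Fin n, α j * (z j ⬝ᵥ W.mulVec (z j)))
            - ∑ i : Fin ℓ, ∑ j : Fin n, α j * (z j ⬝ᵥ W.mulVec (φ i))^2 := by
          rw [Finset.sum_sub_distrib, Finset.sum_comm]
      _ = _ := by
          congr 1
          exact Finset.sum_congr rfl fun i _ => (hRq (φ i)).symm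
  rw [hL, hRRHS]
  apply sub_le_sub_left
  -- main inequality : ∑ i, ⟪R φ i, φ i⟫ ≤ ∑ i ∈ F, lam i
  set c : Fin ℓ → Fin m → ℝ := fun i k => φ i ⬝ᵥ W.mulVec (ψ k) with hc
  have hrep : ∀ i, φ i = ∑ k : Fin m, c i k • ψ k := by
    intro i
    obtain ⟨d, hd⟩ := (Submodule.mem_span_range_iff_exists_fun ℝ).1
      (hbasis ▸ Submodule.mem_top : φ i ∈ Submodule.span ℝ (Set.range ψ))
    have hdk : ∀ k, d k = c i k := by
      intro k
      have : φ i ⬝ᵥ W.mulVec (ψ k) = d k := by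
        rw [← hd, pod_ip_sum_left,
          Finset.sum_congr rfl fun k' _ => by rw [hortho k' k]]
        simp
      rw [← this]
    rw [← hd]
    exact Finset.sum_congr rfl fun k _ => by rw [hdk k]
  have hRlin : ∀ d : Fin m → ℝ,
      R (∑ k : Fin m, d k • ψ k) = ∑ k : Fin m, d k • R (ψ k) := by
    intro d
    rw [hR]
    calc ∑ j : Fin n, (α j * ((∑ k : Fin m, d k • ψ k) ⬝ᵥ W.mulVec (z j))) • z j
        = ∑ j : Fin n, ∑ k : Fin m, (d k * (α j * (ψ k ⬝ᵥ W.mulVec (z j)))) • z j := by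
          refine Finset.sum_congr rfl fun j _ => ?_
          rw [pod_ip_sum_left, Finset.mul_sum, Finset.sum_smul]
          exact Finset.sum_congr rfl fun k _ => by rw [mul_left_comm]
      _ = ∑ k : Fin m, ∑ j : Fin n, (d k * (α j * (ψ k ⬝ᵥ W.mulVec (z j)))) • z j :=
          Finset.sum_comm
      _ = ∑ k : Fin m, d k • R (ψ k) := by
          refine Finset.sum_congr rfl fun k _ => ?_
          rw [hR (ψ k), Finset.smul_sum]
          exact Finset.sum_congr rfl fun j _ => (smul_smul _ _ _).symm
  have hψφ : ∀ (k : Fin m) (i : Fin ℓ), ψ k ⬝ᵥ W.mulVec (φ i) = c i k :=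
    fun k i => pod_ip_symm hWsymm _ _
  have hRφ : ∀ i, (R (φ i)) ⬝ᵥ W.mulVec (φ i) = ∑ k : Fin m, lam k * (c i k)^2 := by
    intro i
    conv_lhs => rw [hrep i]
    rw [hRlin, Finset.sum_congr rfl fun k _ => by rw [heig k, smul_smul],
      pod_ip_sum_left]
    refine Finset.sum_congr rfl fun k _ => ?_
    rw [← hrep i, hψφ k i]
    ring
  have hnorm : ∀ i, ∑ k : Fin m, (c i k)^2 = 1 := by
    intro i
    have h1 : φ i ⬝ᵥ W.mulVec (φ i) = 1 := by simpa using hφortho i i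
    have h2 : φ i ⬝ᵥ W.mulVec (φ i) = ∑ k : Fin m, (c i k)^2 := by
      conv_lhs => rw [hrep i]
      rw [pod_ip_sum_left]
      refine Finset.sum_congr rfl fun k _ => ?_
      rw [← hrep i, hψφ k i]
      ring
    rw [← h2, h1]
  set t : Fin m → ℝ := fun k => ∑ i : Fin ℓ, (c i k)^2 with ht
  have ht0 : ∀ k, 0 ≤ t k := fun k => Finset.sum_nonneg fun i _ => sq_nonneg _
  have ht1 : ∀ k, t k ≤ 1 := by
    intro k
    have h0 := pod_ip_nonneg hWpos
      (ψ k - ∑ i : Fin ℓ, (ψ k ⬝ᵥ W.mulVec (φ i)) • φ i)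
    rw [pod_expand hWsymm Finset.univ φ (fun i _ j _ => hφortho i j) (ψ k)] at h0
    have hψk : ψ k ⬝ᵥ W.mulVec (ψ k) = 1 := by simpa using hortho k k
    rw [hψk, Finset.sum_congr rfl fun i _ => by rw [hψφ k i]] at h0
    have : t k = ∑ i : Fin ℓ, (c i k)^2 := rfl
    linarith [h0]
  have hsumt : ∑ k : Fin m, t k = (ℓ : ℝ) := by
    rw [ht]
    rw [Finset.sum_comm]
    rw [Finset.sum_congr rfl fun i _ => hnorm i]
    simp
  -- rearrangement
  have hidx : ℓ - 1 < m := by omega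
  set c0 : ℝ := lam ⟨ℓ - 1, hidx⟩ with hc0
  have h1 : ∀ k ∈ F, lam k * t k ≤ c0 * (t k - 1) + lam k := by
    intro k hk
    have hkℓ : (k : ℕ) < ℓ := by simpa [hF] using hk
    have hk_le : c0 ≤ lam k := hdesc k ⟨ℓ - 1, hidx⟩ (by rw [Fin.le_def]; simpa using by omega)
    nlinarith [ht1 k, ht0 k]
  have h2 : ∀ k ∈ Finset.univ.filter (fun k : Fin m => ¬ ((k : ℕ) < ℓ)),
      lam k * t k ≤ c0 * t k := by
    intro k hk
    have hkℓ : ¬ ((k : ℕ) < ℓ) := by simpa using hk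
    have hk_le : lam k ≤ c0 := hdesc ⟨ℓ - 1, hidx⟩ k (by rw [Fin.le_def]; simpa using by omega)
    nlinarith [ht0 k]
  have hsplit := Finset.sum_filter_add_sum_filter_not Finset.univ
    (fun k : Fin m => (k : ℕ) < ℓ) (fun k => lam k * t k)
  have htsplit := Finset.sum_filter_add_sum_filter_not Finset.univ
    (fun k : Fin m => (k : ℕ) < ℓ) t
  have hA := Finset.sum_le_sum h1
  have hB := Finset.sum_le_sum h2
  have heF : ∑ k ∈ F, (c0 * (t k - 1) + lam k)
      = c0 * (∑ k ∈ F, t k) - c0 * ℓ + ∑ k ∈ F, lam k := by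
    rw [Finset.sum_add_distrib]
    congr 1
    simp only [mul_sub, mul_one]
    rw [Finset.sum_sub_distrib, ← Finset.mul_sum, Finset.sum_const, hFcard, nsmul_eq_mul]
    ring
  have heG : ∑ k ∈ Finset.univ.filter (fun k : Fin m => ¬ ((k : ℕ) < ℓ)), c0 * t k
      = c0 * ∑ k ∈ Finset.univ.filter (fun k : Fin m => ¬ ((k : ℕ) < ℓ)), t k :=
    (Finset.mul_sum _ _ _).symm
  calc ∑ i : Fin ℓ, (R (φ i)) ⬝ᵥ W.mulVec (φ i)
      = ∑ k : Fin m, lam k * t k := by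
        rw [Finset.sum_congr rfl fun i _ => hRφ i, Finset.sum_comm]
        exact Finset.sum_congr rfl fun k _ => (Finset.mul_sum _ _ _).symm
    _ ≤ ∑ k ∈ F, lam k := by
        rw [← hsplit]
        have := heF
        have := heG
        have hts : ∑ k ∈ F, t k
            + ∑ k ∈ Finset.univ.filter (fun k : Fin m => ¬ ((k : ℕ) < ℓ)), t k
            = (ℓ : ℝ) := by rw [htsplit, hsumt]
        calc ∑ k ∈ F, lam k * t k
              + ∑ k ∈ Finset.univ.filter (fun k : Fin m => ¬ ((k : ℕ) < ℓ)), lam k * t k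
            ≤ (∑ k ∈ F, (c0 * (t k - 1) + lam k))
              + ∑ k ∈ Finset.univ.filter (fun k : Fin m => ¬ ((k : ℕ) < ℓ)), c0 * t k :=
              add_le_add hA hB
          _ = ∑ k ∈ F, lam k := by
              rw [heF, heG]
              have hmul : c0 * (∑ k ∈ F, t k)
                  + c0 * (∑ k ∈ Finset.univ.filter (fun k : Fin m => ¬ ((k : ℕ) < ℓ)), t k)
                  = c0 * ℓ := by rw [← mul_add, hts]
              linarith
  done
end
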